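/- Let G be a chordal graph with terminal set T ⊆ V(G), and let v be a vertex of G with v ∉ T that has exactly one neighbour t belonging to T. If S is a subset feedback vertex set of G with respect to T containing v, then (S ∖ {v}) ∪ {t} is also a subset feedback vertex set of G with respect to T, of size at most |S|. -/

import Mathlib

open SimpleGraph

variable {V : Type*}

/-- A `T`-triangle, represented as its vertex set: three pairwise adjacent
vertices at least one of which is a terminal. -/
def IsTTriangle (G : SimpleGraph V) (T Δ : Set V) : Prop :=
  ∃ a b c : V, Δ = {a, b, c} ∧ G.Adj a b ∧ G.Adj a c ∧ G.Adj b c ∧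
    (a ∈ T ∨ b ∈ T ∨ c ∈ T)

/-- The induced subgraph `G − S` contains a `T`-triangle. -/
def HasTTriangleAvoiding (G : SimpleGraph V) (T S : Set V) : Prop :=
  ∃ Δ : Set V, IsTTriangle G T Δ ∧ Δ ∩ S = ∅

/-- The induced subgraph `G − S` contains a `T`-cycle: a cycle of `G` avoiding
`S` and passing through a vertex of `T`. -/
def HasTCycleAvoiding (G : SimpleGraph V) (T S : Set V) : Prop :=
  ∃ (v : V) (c : G.Walk v v), c.IsCycle ∧ (∀ x ∈ c.support, x ∉ S) ∧
    ∃ t ∈ T, t ∈ c.support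

/-- `S` is a subset feedback vertex set of `G` with respect to `T`:
`G − S` contains no `T`-cycle. -/
def IsSubsetFVS (G : SimpleGraph V) (T S : Set V) : Prop :=
  ¬ HasTCycleAvoiding G T S

/-- A cycle has a chord: an edge of `G` between two vertices of the cycle
which is not an edge of the cycle. -/
def WalkHasChord (G : SimpleGraph V) {v : V} (c : G.Walk v v) : Prop :=
  ∃ x y : V, x ∈ c.support ∧ y ∈ c.support ∧ G.Adj x y ∧ s(x, y) ∉ c.edges

/-- A graph is chordal if every cycle of length at least four has a chord. -/
def Chordal (G : SimpleGraph V) : Prop :=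
  ∀ (v : V) (c : G.Walk v v), c.IsCycle → 4 ≤ c.length → WalkHasChord G c

/-- A bridge: an edge lying on no cycle of the graph. -/
def IsBridgeEdge (G : SimpleGraph V) (e : Sym2 V) : Prop :=
  e ∈ G.edgeSet ∧ ∀ (v : V) (c : G.Walk v v), c.IsCycle → e ∉ c.edges

/-- `(K, I)` is a split partition of `G`: `K` is a clique, `I` an independent
set, and they partition the vertex set. -/
def IsSplitPartition (G : SimpleGraph V) (K I : Set V) : Prop :=
  K ∪ I = Set.univ ∧ K ∩ I = ∅ ∧ G.IsClique K ∧ I.Pairwise fun a b => ¬ G.Adj a b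

/-- The closed neighbourhood `N[v]` of a vertex. -/
def closedNbhd (G : SimpleGraph V) (v : V) : Set V := insert v (G.neighborSet v)

/-- A vertex is simplicial if its closed neighbourhood is a clique. -/
def IsSimplicial (G : SimpleGraph V) (v : V) : Prop := G.IsClique (closedNbhd G v)

/-- A maximal clique. -/
def IsMaxClique (G : SimpleGraph V) (C : Set V) : Prop :=
  G.IsClique C ∧ ∀ C' : Set V, G.IsClique C' → C ⊆ C' → C' = C

/-- A matching, as a set of edges of `G` no two of which share an endvertex. -/
def IsEdgeMatching (G : SimpleGraph V) (M : Set (Sym2 V)) : Prop :=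
  M ⊆ G.edgeSet ∧ ∀ e ∈ M, ∀ f ∈ M, e ≠ f → ∀ z : V, z ∈ e → z ∉ f

/-- A set of edges saturates a vertex if some edge of it is incident with it. -/
def Saturates (M : Set (Sym2 V)) (z : V) : Prop := ∃ e ∈ M, z ∈ e

/-- `M` is a `t`-expansion of `X` into `Y`: every edge of `M` goes between `X`
and `Y`, every vertex of `X` is incident with exactly `t` edges of `M`, and the
edges of `M` are incident with exactly `t * |X|` distinct vertices of `Y`. -/
def IsExpansion (G : SimpleGraph V) (t : ℕ) (X Y : Set V) (M : Set (Sym2 V)) : Prop :=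
  M ⊆ G.edgeSet ∧ (∀ e ∈ M, ∃ x ∈ X, ∃ y ∈ Y, e = s(x, y)) ∧
    (∀ x ∈ X, {e ∈ M | x ∈ e}.ncard = t) ∧
    {y ∈ Y | Saturates M y}.ncard = t * X.ncard


section Helpers

variable {W : Type*} {G : SimpleGraph W}

private lemma mem_support_rotate_iff' [DecidableEq W] {u w : W} (c : G.Walk u u)
    (h : w ∈ c.support) (z : W) : z ∈ (c.rotate w h).support ↔ z ∈ c.support := by
  exact Walk.mem_support_rotate_iff c w h

private lemma length_rotate' [DecidableEq W] {u w : W} (c : G.Walk u u) (h : w ∈ c.support) :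
    (c.rotate w h).length = c.length := by
  exact Walk.length_rotate c w h

private lemma edge_of_length_one {a b : W} (p : G.Walk a b) (h : p.length = 1) :
    s(a, b) ∈ p.edges := by
  cases p with
  | nil => simp at h
  | cons h' q =>
    cases q with
    | nil => simp
    | cons h'' q' => simp [Walk.length_cons] at h

private lemma adj_of_length_three {u z : W} (c : G.Walk u u) (h3 : c.length = 3)
    (hz : z ∈ c.support) (hne : z ≠ u) : G.Adj u z := by
  cases c with
  | nil => simp at h3
  | cons h1 q =>
    cases q with
    | nil => simp at h3
    | cons h2 q2 =>
      cases q2 with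
      | nil => simp at h3
      | cons h3' q3 =>
        cases q3 with
        | nil =>
          simp only [Walk.support_cons, Walk.support_nil, List.mem_cons,
            List.mem_singleton, List.not_mem_nil] at hz
          rcases hz with rfl | rfl | rfl | rfl | h
          · exact absurd rfl hne
          · exact h1
          · exact h3'.symm
          · exact absurd rfl hne
          · exact absurd h (by simp)
        | cons h4 q4 => simp [Walk.length_cons] at h3

private lemma chord_split [DecidableEq W] {x y : W} (c : G.Walk x x) (hc : c.IsCycle)
    (hy : y ∈ c.support) (hxy : G.Adj x y) (hch : s(x, y) ∉ c.edges) :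
    ∃ (c1 : G.Walk y y) (c2 : G.Walk x x), c1.IsCycle ∧ c2.IsCycle ∧
      (∀ z ∈ c1.support, z ∈ c.support) ∧ (∀ z ∈ c2.support, z ∈ c.support) ∧
      c1.length < c.length ∧ c2.length < c.length ∧
      (∀ z ∈ c.support, z ∈ c1.support ∨ z ∈ c2.support) := by
  cases c with
  | nil => exact (hc.not_of_nil).elim
  | cons ha r =>
    rename_i w
    rw [Walk.cons_isCycle_iff] at hc
    obtain ⟨hr, hes⟩ := hc
    have hyx : y ≠ x := hxy.ne'
    have hyr : y ∈ r.support := by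
      rw [Walk.support_cons] at hy
      rcases List.mem_cons.mp hy with h | h
      · exact absurd h hyx
      · exact h
    have hwy : w ≠ y := by
      rintro rfl
      exact hch (by simp)
    set p := r.takeUntil y hyr with hp
    set q := r.dropUntil y hyr with hq
    have hspec : p.append q = r := r.take_spec hyr
    have hpP : p.IsPath := hr.takeUntil hyr
    have hqP : q.IsPath := hr.dropUntil hyr
    have hxq : x ∈ q.support.tail := by
      have : x ∈ q.support := q.end_mem_support
      rw [q.support_eq_cons] at this
      rcases List.mem_cons.mp this with h | h
      · exact absurd h.symm hyx
      · exact h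
    have hrsupp : r.support = p.support ++ q.support.tail := by
      conv_lhs => rw [← hspec]
      rw [Walk.support_append]
    have hxp : x ∉ p.support := by
      have hnd : r.support.Nodup := hr.support_nodup
      rw [hrsupp, List.nodup_append'] at hnd
      exact fun hmem => hnd.2.2 hmem hxq
    have hpe : s(x, y) ∉ p.edges := fun h => hch (by
      simp only [Walk.edges_cons, List.mem_cons]
      exact Or.inr (r.edges_takeUntil_subset hyr h))
    have hqe : s(x, y) ∉ q.edges := fun h => hch (by
      simp only [Walk.edges_cons, List.mem_cons]
      exact Or.inr (r.edges_dropUntil_subset hyr h))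
    have hqlen : 2 ≤ q.length := by
      rcases Nat.lt_or_ge q.length 2 with h | h
      · interval_cases hql : q.length
        · exact absurd (Walk.eq_of_length_eq_zero hql) hyx
        · exact absurd (edge_of_length_one q hql)
            (by rw [Sym2.eq_swap] at hqe; exact hqe)
      · exact h
    have hplen : 1 ≤ p.length := by
      rcases Nat.eq_zero_or_pos p.length with h | h
      · exact absurd (Walk.eq_of_length_eq_zero h) hwy
      · exact h
    have hrlen : r.length = p.length + q.length := by
      conv_lhs => rw [← hspec]
      rw [Walk.length_append]
    refine ⟨Walk.cons hxy.symm (Walk.cons ha p), Walk.cons hxy q, ?_, ?_, ?_, ?_, ?_, ?_, ?_⟩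
    · rw [Walk.cons_isCycle_iff]
      constructor
      · rw [Walk.cons_isPath_iff]
        exact ⟨hpP, hxp⟩
      · simp only [Walk.edges_cons, List.mem_cons]
        rintro (h | h)
        · rw [Sym2.eq_iff] at h
          rcases h with ⟨h1, h2⟩ | ⟨h1, h2⟩
          · exact hyx h1
          · exact hwy h1.symm
        · rw [Sym2.eq_swap] at h
          exact hpe h
    · rw [Walk.cons_isCycle_iff]
      exact ⟨hqP, hqe⟩
    · intro z hz
      simp only [Walk.support_cons, List.mem_cons] at hz ⊢
      rcases hz with rfl | rfl | h
      · exact Or.inr (by rw [hrsupp]; exact List.mem_append_left _ p.end_mem_support)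
      · exact Or.inl rfl
      · exact Or.inr (hrsupp ▸ List.mem_append_left _ h)
    · intro z hz
      simp only [Walk.support_cons, List.mem_cons] at hz ⊢
      rcases hz with rfl | h
      · exact Or.inl rfl
      · exact Or.inr (r.support_dropUntil_subset hyr h)
    · simp only [Walk.length_cons]
      omega
    · simp only [Walk.length_cons]
      omega
    · intro z hz
      simp only [Walk.support_cons, List.mem_cons] at hz ⊢
      rcases hz with rfl | h
      · exact Or.inr (Or.inl rfl)
      · rw [hrsupp, List.mem_append] at h
        rcases h with h | h
        · exact Or.inl (Or.inr (Or.inr h))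
        · exact Or.inr (Or.inr (q.support_eq_cons ▸ List.mem_cons_of_mem _ h))

end Helpers

private lemma no_tcycle_aux {V : Type} (G : SimpleGraph V) (T : Set V)
    (hG : Chordal G) (v t : V) (hvT : v ∉ T) (htT : t ∈ T)
    (huniq : ∀ u : V, G.Adj v u → u ∈ T → u = t) (S : Set V)
    (hS : IsSubsetFVS G T S) :
    ∀ (n : ℕ) (u : V) (c : G.Walk u u), c.IsCycle → c.length ≤ n →
      (∀ x ∈ c.support, x ∉ (S \ {v}) ∪ {t}) → (∃ t' ∈ T, t' ∈ c.support) → False := by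
  classical
  intro n
  induction n with
  | zero =>
    intro u c hc hlen _ _
    have := hc.three_le_length
    omega
  | succ n ih =>
    intro u c hc hlen havoid hterm
    obtain ⟨t', ht'T, ht'm⟩ := hterm
    by_cases hv : v ∈ c.support
    · by_cases h4 : 4 ≤ c.length
      · obtain ⟨x, y, hx, hy, hxy, hch⟩ := hG u c hc h4
        set c' := c.rotate x hx with hc'def
        have hc' : c'.IsCycle := hc.rotate hx
        have hmem : ∀ z, z ∈ c'.support ↔ z ∈ c.support :=
          fun z => mem_support_rotate_iff' c hx z
        have hy' : y ∈ c'.support := (hmem y).mpr hy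
        have hch' : s(x, y) ∉ c'.edges := fun h => hch ((c.rotate_edges x hx).mem_iff.mp h)
        obtain ⟨c1, c2, hc1, hc2, hs1, hs2, hl1, hl2, hcov⟩ :=
          chord_split c' hc' hy' hxy hch'
        have hlen' : c'.length = c.length := length_rotate' c hx
        have ht'' : t' ∈ c'.support := (hmem t').mpr ht'm
        rcases hcov t' ht'' with h | h
        · exact ih y c1 hc1 (by omega)
            (fun z hz => havoid z ((hmem z).mp (hs1 z hz))) ⟨t', ht'T, h⟩
        · exact ih x c2 hc2 (by omega)
            (fun z hz => havoid z ((hmem z).mp (hs2 z hz))) ⟨t', ht'T, h⟩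
      · have h3 : c.length = 3 := by
          have := hc.three_le_length
          omega
        set c' := c.rotate v hv with hc'def
        have h3' : c'.length = 3 := by rw [length_rotate' c hv, h3]
        have ht'' : t' ∈ c'.support := (mem_support_rotate_iff' c hv t').mpr ht'm
        have hne : t' ≠ v := fun h => hvT (h ▸ ht'T)
        have hadjvt' : G.Adj v t' := adj_of_length_three c' h3' ht'' hne
        have : t' = t := huniq t' hadjvt' ht'T
        subst this
        exact havoid t' ht'm (Or.inr rfl)
    · refine hS ⟨u, c, hc, fun x hx hxS => ?_, t', ht'T, ht'm⟩
      by_cases hxv : x = v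
      · exact hv (hxv ▸ hx)
      · exact havoid x hx (Or.inl ⟨hxS, hxv⟩)

/-- a non-terminal vertex `v` with a unique terminal neighbour
`t` can be exchanged for `t` in any subset-FVS containing it. -/
theorem stmt19 {V : Type} [Fintype V] (G : SimpleGraph V) (T : Set V)
    (hG : Chordal G) (v t : V) (hvT : v ∉ T)
    (hadj : G.Adj v t) (htT : t ∈ T)
    (huniq : ∀ u : V, G.Adj v u → u ∈ T → u = t)
    (S : Set V) (hS : IsSubsetFVS G T S) (hvS : v ∈ S) :
    IsSubsetFVS G T ((S \ {v}) ∪ {t}) ∧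
      ((S \ {v}) ∪ {t}).ncard ≤ S.ncard := by
  constructor
  · rintro ⟨u, c, hc, havoid, t', ht'T, ht'm⟩
    exact no_tcycle_aux G T hG v t hvT htT huniq S hS c.length u c hc le_rfl havoid
      ⟨t', ht'T, ht'm⟩
  · have h1 : ((S \ {v}) ∪ {t}).ncard ≤ (S \ {v}).ncard + ({t} : Set V).ncard :=
      Set.ncard_union_le _ _
    have h2 : ({t} : Set V).ncard = 1 := Set.ncard_singleton t
    have h3 : (S \ {v}).ncard + 1 = S.ncard := Set.ncard_diff_singleton_add_one hvS
    omega
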